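/- Let B be a finite left regular band and k a commutative ring with unit. Then the semigroup algebra kB has a right identity: there exists η ∈ kB such that x·η = x for all x ∈ kB. -/

import Mathlib

/-- The semigroup algebra of a finite left regular band over any commutative ring
has a right identity. -/
theorem stmt6 {B : Type*} [Semigroup B] [Fintype B] {k : Type*} [CommRing k]
    (idem : ∀ x : B, x * x = x) (lrb : ∀ x y : B, x * y * x = x * y) :
    ∃ η : MonoidAlgebra k B, ∀ x : MonoidAlgebra k B, x * η = x := by
  classical
  suffices h : ∃ η : MonoidAlgebra k B, ∀ c : B,
      (MonoidAlgebra.single c (1:k)) * η = MonoidAlgebra.single c 1 by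
    obtain ⟨η, hη⟩ := h
    refine ⟨η, fun x => ?_⟩
    induction x using MonoidAlgebra.induction with
    | zero => simp
    | single_add a b f _ _ ih =>
      rw [add_mul, ih]
      congr 1
      have hb : (MonoidAlgebra.single a b : MonoidAlgebra k B)
          = b • MonoidAlgebra.single a (1:k) := by
        rw [MonoidAlgebra.smul_single', mul_one]
      rw [hb, smul_mul_assoc]
      exact congrArg _ (hη a)
  have key : ∀ l : List B, ∃ η : MonoidAlgebra k B, ∀ c ∈ l,
      ((MonoidAlgebra.single c (1:k)) * η = MonoidAlgebra.single c 1) ∧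
      ∀ b : B, (MonoidAlgebra.single (b*c) (1:k)) * η
        = MonoidAlgebra.single (b*c) 1 := by
    intro l
    induction l with
    | nil => exact ⟨0, by simp⟩
    | cons c l ih =>
      obtain ⟨η, hη⟩ := ih
      refine ⟨η + MonoidAlgebra.single c 1 - MonoidAlgebra.single c 1 * η, ?_⟩
      rintro x hx
      rcases List.mem_cons.mp hx with rfl | hx
      · constructor
        · rw [mul_sub, mul_add, ← mul_assoc,
            MonoidAlgebra.single_mul_single, one_mul, idem]
          abel
        · intro b
          rw [mul_sub, mul_add, ← mul_assoc,
            MonoidAlgebra.single_mul_single, one_mul, mul_assoc b, idem]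
          abel
      · obtain ⟨hx1, hx2⟩ := hη x hx
        constructor
        · rw [mul_sub, mul_add, ← mul_assoc, hx1,
            MonoidAlgebra.single_mul_single, one_mul]
          have h2 : (MonoidAlgebra.single (x*c) (1:k)) * η
              = MonoidAlgebra.single (x*c) 1 := by
            have := hx2 (x*c)
            rwa [lrb x c] at this
          rw [h2]; abel
        · intro b
          rw [mul_sub, mul_add, ← mul_assoc, hx2 b,
            MonoidAlgebra.single_mul_single, one_mul]
          have h2 : (MonoidAlgebra.single (b*x*c) (1:k)) * η
              = MonoidAlgebra.single (b*x*c) 1 := by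
            have := hx2 ((b*x*c)*b)
            rwa [mul_assoc, lrb (b*x) c] at this
          rw [h2]; abel
  obtain ⟨η, hη⟩ := key (Finset.univ.toList)
  exact ⟨η, fun c => (hη c (by simp)).1⟩
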